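/- For δ, μ ∈ (0,1) and p ∈ (0,1/2), the left derivative of g at 1 equals g'(1) = 2(1-δ)[2μ(1-p)∑_{k=0}^∞ (2p)^k + (1-μ)] = 2(1-δ)(1 + μ - 2p)/(1 - 2p), where g(s) = (δ + (1-δ)[μ(1-p)∑_{k=1}^∞ s^{2^k} p^{k-1} + (1-μ)s])². -/

import Mathlib

open Set Filter Finset Topology in
lemma F_left_deriv (p : ℝ) (hp0 : 0 < p) (hp2 : p < 1/2) :
    HasDerivWithinAt (fun s : ℝ => ∑' k : ℕ, s ^ (2 ^ (k + 1)) * p ^ k)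
      (2 / (1 - 2 * p)) (Set.Iic 1) 1 := by
  have hp1 : p < 1 := by linarith
  have h2p : 2 * p < 1 := by linarith
  have h2p0 : (0:ℝ) ≤ 2 * p := by linarith
  rw [hasDerivWithinAt_iff_tendsto_slope]
  have hdiff : Set.Iic (1:ℝ) \ {1} = Set.Iio 1 := by
    ext x; simp [lt_iff_le_and_ne]
  rw [hdiff]
  have hsum : ∀ s : ℝ, s ∈ Set.Icc (0:ℝ) 1 →
      Summable (fun k : ℕ => s ^ (2 ^ (k + 1)) * p ^ k) := by
    intro s hs
    apply Summable.of_nonneg_of_le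
        (fun k => mul_nonneg (pow_nonneg hs.1 _) (pow_nonneg hp0.le _))
        (fun k => ?_) (summable_geometric_of_lt_one hp0.le hp1)
    have h1 : s ^ (2 ^ (k + 1)) ≤ 1 := pow_le_one₀ hs.1 hs.2
    have h2 : (0:ℝ) ≤ p ^ k := pow_nonneg hp0.le _
    nlinarith
  have key : Tendsto (fun s : ℝ => ∑' k : ℕ,
        p ^ k * ∑ j ∈ Finset.range (2 ^ (k + 1)), s ^ j)
      (𝓝[Set.Iio 1] 1) (𝓝 (2 / (1 - 2 * p))) := by
    have hval : (2 / (1 - 2 * p) : ℝ)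
        = ∑' k : ℕ, p ^ k * ((2:ℕ) ^ (k + 1) : ℕ) := by
      have h : ∀ k : ℕ, p ^ k * (((2:ℕ) ^ (k + 1) : ℕ) : ℝ) = 2 * (2 * p) ^ k := by
        intro k; push_cast; ring
      rw [tsum_congr h, tsum_mul_left, tsum_geometric_of_lt_one h2p0 h2p]
      field_simp
    rw [hval]
    apply tendsto_tsum_of_dominated_convergence
      (bound := fun k : ℕ => 2 * (2 * p) ^ k)
    · exact (summable_geometric_of_lt_one h2p0 h2p).mul_left 2
    · intro k
      have hc : ContinuousAt (fun s : ℝ =>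
          p ^ k * ∑ j ∈ Finset.range (2 ^ (k + 1)), s ^ j) 1 := by
        fun_prop
      have h1 : (fun s : ℝ => p ^ k * ∑ j ∈ Finset.range (2 ^ (k + 1)), s ^ j) 1
          = p ^ k * (((2:ℕ) ^ (k + 1) : ℕ) : ℝ) := by simp
      rw [← h1]
      exact hc.continuousWithinAt.tendsto
    · filter_upwards [Ioo_mem_nhdsLT_of_mem (Set.mem_Ioc.2 ⟨zero_lt_one, le_refl 1⟩)]
        with s hs k
      have hs0 : (0:ℝ) ≤ s := hs.1.le
      have hs1 : s ≤ 1 := hs.2.le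
      have hbound : ∑ j ∈ Finset.range (2 ^ (k + 1)), s ^ j
          ≤ (((2:ℕ) ^ (k + 1) : ℕ) : ℝ) := by
        calc ∑ j ∈ Finset.range (2 ^ (k + 1)), s ^ j
            ≤ ∑ _j ∈ Finset.range (2 ^ (k + 1)), (1:ℝ) :=
              Finset.sum_le_sum (fun j _ => pow_le_one₀ hs0 hs1)
          _ = (((2:ℕ) ^ (k + 1) : ℕ) : ℝ) := by simp
      have hnn : (0:ℝ) ≤ ∑ j ∈ Finset.range (2 ^ (k + 1)), s ^ j :=
        Finset.sum_nonneg (fun j _ => pow_nonneg hs0 _)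
      have hpk : (0:ℝ) ≤ p ^ k := pow_nonneg hp0.le _
      rw [Real.norm_eq_abs, abs_of_nonneg (mul_nonneg hpk hnn)]
      calc p ^ k * ∑ j ∈ Finset.range (2 ^ (k + 1)), s ^ j
          ≤ p ^ k * (((2:ℕ) ^ (k + 1) : ℕ) : ℝ) :=
            mul_le_mul_of_nonneg_left hbound hpk
        _ = 2 * (2 * p) ^ k := by push_cast; ring
  refine key.congr' ?_
  filter_upwards [Ioo_mem_nhdsLT_of_mem (Set.mem_Ioc.2 ⟨zero_lt_one, le_refl 1⟩)]
    with s hs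
  have hs0 : (0:ℝ) ≤ s := hs.1.le
  have hs1 : s ≤ 1 := hs.2.le
  have hsne : s - 1 ≠ 0 := sub_ne_zero.2 hs.2.ne
  have hFs := hsum s ⟨hs0, hs1⟩
  have hF1 := hsum 1 ⟨zero_le_one, le_refl 1⟩
  have hterm : ∀ k : ℕ, p ^ k * ∑ j ∈ Finset.range (2 ^ (k + 1)), s ^ j
      = (s ^ (2 ^ (k + 1)) * p ^ k - (1:ℝ) ^ (2 ^ (k + 1)) * p ^ k) * (s - 1)⁻¹ := by
    intro k
    have h := geom_sum_mul s (2 ^ (k + 1))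
    rw [one_pow]
    field_simp
    linear_combination h
  show (∑' k : ℕ, p ^ k * ∑ j ∈ Finset.range (2 ^ (k + 1)), s ^ j)
      = slope (fun s : ℝ => ∑' k : ℕ, s ^ (2 ^ (k + 1)) * p ^ k) 1 s
  rw [slope_def_field, div_eq_mul_inv, ← Summable.tsum_sub hFs hF1, ← tsum_mul_right]
  exact tsum_congr hterm

theorem g_left_deriv_at_one (δ μ p : ℝ) (hδ : δ ∈ Set.Ioo (0:ℝ) 1)
    (hμ : μ ∈ Set.Ioo (0:ℝ) 1) (hp : p ∈ Set.Ioo (0:ℝ) (1/2))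
    (g : ℝ → ℝ)
    (hg : ∀ s, g s =
      (δ + (1 - δ) * (μ * (1 - p) * (∑' k : ℕ, s ^ (2 ^ (k + 1)) * p ^ k)
        + (1 - μ) * s)) ^ 2) :
    HasDerivWithinAt g (2 * (1 - δ) * (1 + μ - 2 * p) / (1 - 2 * p))
        (Set.Iic 1) 1 ∧
    2 * (1 - δ) * (2 * μ * (1 - p) * (∑' k : ℕ, (2 * p) ^ k) + (1 - μ))
      = 2 * (1 - δ) * (1 + μ - 2 * p) / (1 - 2 * p) := by
  have hp1 : p < 1 := by linarith [hp.2]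
  have h12p : (0:ℝ) < 1 - 2 * p := by linarith [hp.2]
  have h1p : (0:ℝ) < 1 - p := by linarith
  have hF := F_left_deriv p hp.1 hp.2
  have hF1 : (∑' k : ℕ, (1:ℝ) ^ (2 ^ (k + 1)) * p ^ k) = (1 - p)⁻¹ := by
    simp only [one_pow, one_mul]
    exact tsum_geometric_of_lt_one hp.1.le hp1
  have hc : HasDerivWithinAt
      (fun s : ℝ => δ + (1 - δ) * (μ * (1 - p) *
        (∑' k : ℕ, s ^ (2 ^ (k + 1)) * p ^ k) + (1 - μ) * s))
      ((1 - δ) * (μ * (1 - p) * (2 / (1 - 2 * p)) + (1 - μ))) (Set.Iic 1) 1 := by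
    have h1 := (hF.const_mul (μ * (1 - p))).add
      ((hasDerivWithinAt_id (1:ℝ) (Set.Iic 1)).const_mul (1 - μ))
    have h2 := (h1.const_mul (1 - δ)).const_add δ
    exact h2.congr_deriv (by ring)
  constructor
  · have h := hc.pow 2
    rw [hF1] at h
    have hder : (2:ℕ) * (δ + (1 - δ) * (μ * (1 - p) * (1 - p)⁻¹ + (1 - μ) * 1)) ^ (2 - 1)
        * ((1 - δ) * (μ * (1 - p) * (2 / (1 - 2 * p)) + (1 - μ)))
        = 2 * (1 - δ) * (1 + μ - 2 * p) / (1 - 2 * p) := by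
      have : μ * (1 - p) * (1 - p)⁻¹ = μ := by field_simp
      rw [this]
      have h0' : (1:ℝ) - 2 * p ≠ 0 := ne_of_gt h12p
      rw [eq_div_iff h0', div_eq_mul_inv]
      have hinv : (1 - 2 * p)⁻¹ * (1 - 2 * p) = 1 := inv_mul_cancel₀ h0'
      rw [show (2:ℕ) - 1 = 1 from rfl]
      linear_combination 2 * (1 - δ) * 2 * μ * (1 - p) * hinv
    rw [hder] at h
    exact h.congr (fun y _ => hg y) (hg 1)
  · rw [tsum_geometric_of_lt_one (by linarith [hp.1] : (0:ℝ) ≤ 2 * p) (by linarith)]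
    have h0 : (1:ℝ) - 2 * p ≠ 0 := ne_of_gt h12p
    rw [eq_div_iff h0]
    have hinv : (1 - 2 * p)⁻¹ * (1 - 2 * p) = 1 := inv_mul_cancel₀ h0
    linear_combination 2 * (1 - δ) * (2 * μ * (1 - p)) * hinv
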